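/- Let R be a commutative ring that is an algebra over ℚ, let α, β ∈ R, and let a : ℕ → R be a sequence with a₀ = 0. Set φ := Σ_{n≥0} aₙ·tⁿ/n! ∈ R[[t]]. Then φ satisfies the differential equation (1 + α·t − β·φ)·φ′ = 1 + φ if and only if a₁ = 1 and for every n ≥ 1 one has a_{n+1} = (1 − n·α)·aₙ + β·Σ_{k=1}^{n} binom(n,k)·a_k·a_{n+1−k}. -/

import Mathlib

open PowerSeries Finset

private lemma coeff_derivativeFun_old {R : Type*} [CommRing R] (f : PowerSeries R) (n : ℕ) :
    PowerSeries.coeff n f.derivativeFun = PowerSeries.coeff (n + 1) f * (n + 1) :=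
  PowerSeries.coeff_derivative f n

private lemma qsmul_cancel_iff {R : Type*} [AddCommGroup R] [Module ℚ R] {q : ℚ} (hq : q ≠ 0)
    {x y : R} : q • x = q • y ↔ x = y := by
  constructor
  · intro h
    have := congrArg (fun z => q⁻¹ • z) h
    simpa [inv_smul_smul₀ hq] using this
  · intro h; rw [h]

private lemma mul_natCast_smul {R : Type*} [CommRing R] [Algebra ℚ R] (q : ℚ) (x : R) (m : ℕ) :
    (q • x) * ((m : R)) = (q * m) • x := by
  have h : x * (m : R) = (m : ℚ) • x := by
    rw [Algebra.smul_def, map_natCast, mul_comm]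
  rw [smul_mul_assoc, h, smul_smul]

private lemma deriv_coeff_smul {R : Type*} [CommRing R] [Algebra ℚ R] (a : ℕ → R) (n : ℕ) :
    ((((n+1).factorial : ℚ)⁻¹ • a (n+1)) * ((n : R) + 1)) = ((n.factorial : ℚ)⁻¹) • a (n+1) := by
  have h : ((n : R) + 1) = ((n + 1 : ℕ) : R) := by push_cast; ring
  rw [h, mul_natCast_smul]
  congr 1
  have h1 : ((n+1).factorial : ℚ) = (n+1) * n.factorial := by
    rw [Nat.factorial_succ]; push_cast; ring
  have h2 : ((n:ℚ)+1) ≠ 0 := by positivity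
  have h3 : ((n.factorial :ℚ)) ≠ 0 := by exact_mod_cast n.factorial_ne_zero
  rw [h1]; field_simp; norm_num

private lemma prod_term_smul {R : Type*} [CommRing R] [Algebra ℚ R] (a : ℕ → R) {n p q : ℕ}
    (hpq : p + q = n) :
    ((p.factorial : ℚ)⁻¹ • a p) * ((q.factorial : ℚ)⁻¹ • a (q+1)) =
      (n.factorial : ℚ)⁻¹ • ((n.choose p : R) * (a p * a (q+1))) := by
  rw [smul_mul_assoc, mul_smul_comm, smul_smul]
  have hscal : (p.factorial : ℚ)⁻¹ * (q.factorial : ℚ)⁻¹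
      = (n.factorial : ℚ)⁻¹ * (n.choose p : ℚ) := by
    have hpn : p ≤ n := by omega
    have hfac : (n.choose p) * p.factorial * (n-p).factorial = n.factorial :=
      Nat.choose_mul_factorial_mul_factorial hpn
    have hq : n - p = q := by omega
    rw [hq] at hfac
    have hc : (n.choose p : ℚ) * (p.factorial : ℚ) * (q.factorial : ℚ) = (n.factorial : ℚ) := by
      exact_mod_cast congrArg (Nat.cast : ℕ → ℚ) hfac
    have h1 : (p.factorial : ℚ) ≠ 0 := by exact_mod_cast p.factorial_ne_zero
    have h2 : (q.factorial : ℚ) ≠ 0 := by exact_mod_cast q.factorial_ne_zero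
    have h3 : (n.factorial : ℚ) ≠ 0 := by exact_mod_cast n.factorial_ne_zero
    field_simp
    linarith [hc]
  have hcs : ((n.choose p : ℚ)) • (a p * a (q+1)) = (n.choose p : R) * (a p * a (q+1)) := by
    rw [Algebra.smul_def, map_natCast]
  rw [hscal, mul_smul, hcs]



/-- Let `R` be a commutative `ℚ`-algebra, `α β : R`, and `a : ℕ → R` with
`a 0 = 0`. Set `φ := Σ_{n≥0} aₙ·tⁿ/n!`. Then `φ` satisfies `(1 + α·t − β·φ)·φ′ = 1 + φ`
iff `a 1 = 1` and for all `n ≥ 1`,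
`a (n+1) = (1 − n·α)·aₙ + β·Σ_{k=1}^{n} binom(n,k)·a_k·a_{n+1−k}`. -/
theorem diff_eq_iff_recursion
    (R : Type*) [CommRing R] [Algebra ℚ R] (α β : R) (a : ℕ → R) (h0 : a 0 = 0)
    (φ : PowerSeries R)
    (hφ : φ = PowerSeries.mk fun n => ((n.factorial : ℚ)⁻¹ • a n)) :
    ((1 + PowerSeries.C α * PowerSeries.X - PowerSeries.C β * φ) * φ.derivativeFun
        = 1 + φ) ↔
      (a 1 = 1 ∧ ∀ n : ℕ, 1 ≤ n →
        a (n + 1) = (1 - (n : R) * α) * a n +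
          β * ∑ k ∈ Finset.Icc 1 n, (n.choose k : R) * a k * a (n + 1 - k)) := by
  subst hφ
  set ψ : PowerSeries R := PowerSeries.mk fun n => ((n.factorial : ℚ)⁻¹ • a n) with hψ
  have hLexp : (1 + C α * X - C β * ψ) * ψ.derivativeFun =
      ψ.derivativeFun + C α * (X * ψ.derivativeFun) - C β * (ψ * ψ.derivativeFun) := by
    ring
  rw [hLexp, PowerSeries.ext_iff]
  have hforall : (∀ n : ℕ,
        (PowerSeries.coeff n) (ψ.derivativeFun + C α * (X * ψ.derivativeFun)
          - C β * (ψ * ψ.derivativeFun)) = (PowerSeries.coeff n) (1 + ψ))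
      ↔ ((PowerSeries.coeff 0) (ψ.derivativeFun + C α * (X * ψ.derivativeFun)
          - C β * (ψ * ψ.derivativeFun)) = (PowerSeries.coeff 0) (1 + ψ)) ∧
        (∀ n : ℕ, (PowerSeries.coeff (n+1)) (ψ.derivativeFun + C α * (X * ψ.derivativeFun)
          - C β * (ψ * ψ.derivativeFun)) = (PowerSeries.coeff (n+1)) (1 + ψ)) := by
    constructor
    · intro h; exact ⟨h 0, fun n => h (n+1)⟩
    · rintro ⟨h1, h2⟩ n
      cases n with
      | zero => exact h1
      | succ m => exact h2 m
  rw [hforall]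
  refine and_congr ?_ ?_
  · -- n = 0 case
    simp only [map_sub, map_add, coeff_derivativeFun_old, coeff_C_mul, hψ, coeff_mk,
      PowerSeries.coeff_mul, Finset.Nat.antidiagonal_zero, Finset.sum_singleton,
      PowerSeries.coeff_one, PowerSeries.coeff_zero_X, h0]
    simp [h0, Nat.factorial]
  · -- n ≥ 1 case
    have hrw : (∀ n : ℕ, 1 ≤ n →
        a (n + 1) = (1 - (n : R) * α) * a n +
          β * ∑ k ∈ Finset.Icc 1 n, (n.choose k : R) * a k * a (n + 1 - k)) ↔
        (∀ m : ℕ, a (m + 1 + 1) = (1 - ((m+1 : ℕ) : R) * α) * a (m+1) +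
          β * ∑ k ∈ Finset.Icc 1 (m+1), ((m+1).choose k : R) * a k * a (m + 1 + 1 - k)) := by
      constructor
      · intro h m; exact h (m+1) (Nat.succ_le_succ (Nat.zero_le m))
      · intro h n hn
        cases n with
        | zero => omega
        | succ m => exact h m
    rw [hrw]
    refine forall_congr' fun n => ?_
    rw [map_sub, map_add, coeff_derivativeFun_old, coeff_C_mul, coeff_succ_X_mul,
      coeff_derivativeFun_old, coeff_C_mul, PowerSeries.coeff_mul]
    simp only [hψ, coeff_mk, coeff_derivativeFun_old, PowerSeries.coeff_one, map_add,
      Nat.succ_ne_zero, if_false, zero_add]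
    rw [deriv_coeff_smul a (n+1), deriv_coeff_smul a n]
    have hS : ∑ x ∈ Finset.HasAntidiagonal.antidiagonal (n + 1),
        (x.1.factorial : ℚ)⁻¹ • a x.1 * (((x.2 + 1).factorial : ℚ)⁻¹ • a (x.2 + 1) * ((x.2 : R) + 1))
        = ((n+1).factorial : ℚ)⁻¹ •
          ∑ x ∈ Finset.HasAntidiagonal.antidiagonal (n+1), (((n+1).choose x.1 : R) * (a x.1 * a (x.2+1))) := by
      rw [Finset.smul_sum]
      refine Finset.sum_congr rfl fun x hx => ?_
      rw [deriv_coeff_smul a x.2, prod_term_smul a (Finset.HasAntidiagonal.mem_antidiagonal.mp hx)]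
    rw [hS]
    have hA : α * ((n.factorial : ℚ)⁻¹ • a (n+1))
        = ((n+1).factorial : ℚ)⁻¹ • (((n+1 : ℕ) : R) * α * a (n+1)) := by
      rw [mul_smul_comm]
      rw [show (((n+1 : ℕ)) : R) * α * a (n+1) = ((n+1 : ℕ) : ℚ) • (α * a (n+1)) by
        rw [Algebra.smul_def, map_natCast]; ring]
      rw [smul_smul]
      congr 1
      have h1 : ((n+1).factorial : ℚ) = (n+1) * n.factorial := by
        rw [Nat.factorial_succ]; push_cast; ring
      have h2 : ((n:ℚ)+1) ≠ 0 := by positivity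
      have h3 : ((n.factorial : ℚ)) ≠ 0 := by exact_mod_cast n.factorial_ne_zero
      rw [h1]; push_cast; field_simp
    rw [hA, mul_smul_comm, ← smul_add, ← smul_sub]
    have hfact : (((n+1).factorial : ℚ))⁻¹ ≠ 0 := by
      exact inv_ne_zero (by exact_mod_cast (n+1).factorial_ne_zero)
    rw [qsmul_cancel_iff hfact]
    have hSS : ∑ x ∈ Finset.HasAntidiagonal.antidiagonal (n+1), (((n+1).choose x.1 : R) * (a x.1 * a (x.2+1)))
        = ∑ k ∈ Finset.Icc 1 (n+1), ((n+1).choose k : R) * a k * a (n+1+1-k) := by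
      rw [Finset.Nat.sum_antidiagonal_eq_sum_range_succ_mk]
      have hins : Finset.range (n+1+1) = insert 0 (Finset.Icc 1 (n+1)) := by
        ext x; simp; omega
      rw [hins, Finset.sum_insert (by simp)]
      simp only [h0, zero_mul, mul_zero, zero_add]
      refine Finset.sum_congr rfl fun k hk => ?_
      have hk' : 1 ≤ k ∧ k ≤ n+1 := by simpa using hk
      have hnk : n + 1 - k + 1 = n + 1 + 1 - k := by omega
      rw [hnk, mul_assoc]
    rw [hSS]
    constructor <;> intro h <;> linear_combination h
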